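/- Let V ⊆ ℂ^m ⊗ ℂ^n be an EB space, let W be an arbitrary m'×m complex matrix, and let U be an n×n unitary matrix. Then the subspace (W ⊗ U)V = {(W ⊗ U)v : v ∈ V} of ℂ^{m'} ⊗ ℂ^n is an EB space. Conversely, if m' = m, W is invertible, U is unitary, and (W ⊗ U)V is an EB space, then V is an EB space. -/

import Mathlib

open scoped BigOperators ComplexOrder
open Kronecker

noncomputable section

/-- The `j`-th standard basis vector of `ℂ^q` (zero if `j ≥ q`). -/
def ee (q : ℕ) (j : ℕ) : Fin q → ℂ := fun b => if (b : ℕ) = j then 1 else 0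

/-- Tensor (Kronecker) product of two vectors. -/
def tens {A B : Type*} (x : A → ℂ) (y : B → ℂ) : A × B → ℂ := fun p => x p.1 * y p.2

/-- A matrix on `ℂ^A ⊗ ℂ^B` is separable if it is a finite sum of Kronecker products of
rank-one positive semidefinite matrices. -/
def IsSep {A B : Type*} (ρ : Matrix (A × B) (A × B) ℂ) : Prop :=
  ∃ (T : ℕ) (x : Fin T → A → ℂ) (y : Fin T → B → ℂ),
    ρ = ∑ t : Fin T, Matrix.of (fun p q : A × B =>
      (x t p.1 * (starRingEnd ℂ) (x t q.1)) * (y t p.2 * (starRingEnd ℂ) (y t q.2)))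

/-- Partial trace over the middle (B) system of the rank-one projection `|Ψ⟩⟨Ψ|`. -/
def TrB {A B : Type*} [Fintype B] {k : ℕ} (Ψ : A × B × Fin k → ℂ) :
    Matrix (A × Fin k) (A × Fin k) ℂ :=
  Matrix.of fun p q => ∑ b : B, Ψ (p.1, b, p.2) * (starRingEnd ℂ) (Ψ (q.1, b, q.2))

/-- A subspace `V ⊆ ℂ^A ⊗ ℂ^B` is entanglement breaking if for every ancilla dimension
`k ≥ 1` and every `Ψ` whose slices all lie in `V`, the matrix `Tr_B |Ψ⟩⟨Ψ|` is separable. -/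
def IsEBSpace {A B : Type*} [Fintype B] (V : Submodule ℂ (A × B → ℂ)) : Prop :=
  ∀ (k : ℕ), 1 ≤ k → ∀ Ψ : A × B × Fin k → ℂ,
    (∀ ℓ : Fin k, (fun ab : A × B => Ψ (ab.1, ab.2, ℓ)) ∈ V) → IsSep (TrB Ψ)

/-- Partial transpose on the B system. -/
def PT {A B : Type*} (ρ : Matrix (A × B) (A × B) ℂ) : Matrix (A × B) (A × B) ℂ :=
  Matrix.of fun p q => ρ (p.1, q.2) (q.1, p.2)

/-- Partial trace over the B system of a matrix. -/
def trBmat {A B : Type*} [Fintype B] (ρ : Matrix (A × B) (A × B) ℂ) : Matrix A A ℂ :=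
  Matrix.of fun a a' => ∑ b : B, ρ (a, b) (a', b)

/-- Partial trace over the A system of a matrix. -/
def trAmat {A B : Type*} [Fintype A] (ρ : Matrix (A × B) (A × B) ℂ) : Matrix B B ℂ :=
  Matrix.of fun b b' => ∑ a : A, ρ (a, b) (a, b')

lemma isSep_conj {A A' B : Type*} [Fintype A] (W : Matrix A' A ℂ)
    {ρ : Matrix (A × B) (A × B) ℂ} (h : IsSep ρ) :
    IsSep (Matrix.of fun p q : A' × B =>
      ∑ a : A, ∑ a1 : A, W p.1 a * (starRingEnd ℂ) (W q.1 a1) * ρ (a, p.2) (a1, q.2)) := by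
  obtain ⟨T, x, y, rfl⟩ := h
  refine ⟨T, fun t => W.mulVec (x t), y, ?_⟩
  ext p q
  simp only [Matrix.of_apply, Matrix.sum_apply, Matrix.mulVec, dotProduct, map_sum,
    map_mul, Finset.mul_sum, Finset.sum_mul]
  conv_lhs => rw [show (∑ a : A, ∑ a1 : A, ∑ t : Fin T, W p.1 a * (starRingEnd ℂ) (W q.1 a1) * (x t a * (starRingEnd ℂ) (x t a1) * (y t p.2 * (starRingEnd ℂ) (y t q.2)))) = ∑ a : A, ∑ t : Fin T, ∑ a1 : A, W p.1 a * (starRingEnd ℂ) (W q.1 a1) * (x t a * (starRingEnd ℂ) (x t a1) * (y t p.2 * (starRingEnd ℂ) (y t q.2))) from Finset.sum_congr rfl fun a _ => Finset.sum_comm]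
  rw [Finset.sum_comm]
  refine Finset.sum_congr rfl fun t _ => Finset.sum_comm.trans ?_
  refine Finset.sum_congr rfl fun a _ => Finset.sum_congr rfl fun a1 _ => ?_
  ring

lemma trB_kron {m m' n k : ℕ} (W : Matrix (Fin m') (Fin m) ℂ) (U : Matrix (Fin n) (Fin n) ℂ)
    (hU : ∀ d d' : Fin n, (∑ b, (starRingEnd ℂ) (U b d') * U b d) = if d' = d then 1 else 0)
    (Ψ : Fin m × Fin n × Fin k → ℂ) (Ψ' : Fin m' × Fin n × Fin k → ℂ)
    (hΨ' : ∀ a b ℓ, Ψ' (a, b, ℓ) = ∑ cd : Fin m × Fin n, W a cd.1 * U b cd.2 * Ψ (cd.1, cd.2, ℓ)) :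
    TrB Ψ' = Matrix.of fun p q : Fin m' × Fin k =>
      ∑ a, ∑ a1, W p.1 a * (starRingEnd ℂ) (W q.1 a1) * TrB Ψ (a, p.2) (a1, q.2) := by
  ext p q
  simp only [TrB, Matrix.of_apply, hΨ', map_sum, map_mul, Finset.sum_mul, Finset.mul_sum]
  show _ = ∑ a : Fin m, ∑ a1 : Fin m, ∑ b0 : Fin n,
      W p.1 a * (starRingEnd ℂ) (W q.1 a1) * (Ψ (a, b0, p.2) * (starRingEnd ℂ) (Ψ (a1, b0, q.2)))
  rw [Finset.sum_comm]
  calc (∑ e : Fin m × Fin n, ∑ b : Fin n, ∑ f : Fin m × Fin n,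
      W p.1 f.1 * U b f.2 * Ψ (f.1, f.2, p.2) *
        ((starRingEnd ℂ) (W q.1 e.1) * (starRingEnd ℂ) (U b e.2) *
          (starRingEnd ℂ) (Ψ (e.1, e.2, q.2))))
      = ∑ e : Fin m × Fin n, ∑ f : Fin m × Fin n,
          (W p.1 f.1 * Ψ (f.1, f.2, p.2) * ((starRingEnd ℂ) (W q.1 e.1) *
            (starRingEnd ℂ) (Ψ (e.1, e.2, q.2)))) * (if e.2 = f.2 then 1 else 0) := by
        refine Finset.sum_congr rfl fun e _ => Finset.sum_comm.trans
          (Finset.sum_congr rfl fun f _ => ?_)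
        rw [← hU f.2 e.2, Finset.mul_sum]
        exact Finset.sum_congr rfl fun b _ => by ring
    _ = ∑ e : Fin m × Fin n, ∑ c : Fin m,
          W p.1 c * Ψ (c, e.2, p.2) * ((starRingEnd ℂ) (W q.1 e.1) *
            (starRingEnd ℂ) (Ψ (e.1, e.2, q.2))) := by
        refine Finset.sum_congr rfl fun e _ => ?_
        rw [Fintype.sum_prod_type]
        refine Finset.sum_congr rfl fun c _ => ?_
        simp [Finset.sum_ite_eq, mul_ite]
    _ = _ := by
        rw [Fintype.sum_prod_type]
        refine ((Finset.sum_congr rfl fun a1 _ => Finset.sum_comm).trans Finset.sum_comm).trans ?_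
        refine Finset.sum_congr rfl fun a _ => Finset.sum_congr rfl fun a1 _ =>
          Finset.sum_congr rfl fun b0 _ => by ring

lemma eb_forward (m m' n : ℕ) (V : Submodule ℂ (Fin m × Fin n → ℂ))
    (W : Matrix (Fin m') (Fin m) ℂ) (U : Matrix (Fin n) (Fin n) ℂ)
    (hU : U ∈ Matrix.unitaryGroup (Fin n) ℂ) (hV : IsEBSpace V) :
    IsEBSpace (Submodule.map (W ⊗ₖ U).mulVecLin V) := by
  intro k hk Ψ' hΨ'
  choose v hvV hveq using hΨ'
  set Ψ : Fin m × Fin n × Fin k → ℂ := fun p => v p.2.2 (p.1, p.2.1) with hΨdef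
  have hsl : ∀ ℓ, (fun ab : Fin m × Fin n => Ψ (ab.1, ab.2, ℓ)) ∈ V := fun ℓ => hvV ℓ
  have hsep := hV k hk Ψ hsl
  have hU' : ∀ d d' : Fin n, (∑ b, (starRingEnd ℂ) (U b d') * U b d) = if d' = d then 1 else 0 :=
    fun d d' => by simpa [Matrix.mul_apply, Matrix.one_apply] using congrFun (congrFun hU.1 d') d
  have heq : ∀ a b ℓ, Ψ' (a, b, ℓ) =
      ∑ cd : Fin m × Fin n, W a cd.1 * U b cd.2 * Ψ (cd.1, cd.2, ℓ) := by
    intro a b ℓ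
    rw [← congrFun (hveq ℓ) (a, b)]
    simp [Matrix.mulVecLin_apply, Matrix.mulVec, dotProduct, Matrix.kroneckerMap_apply]
    rfl
  rw [trB_kron W U hU' Ψ Ψ' heq]
  exact isSep_conj W hsep

/-- `(W ⊗ U)V` is EB whenever `V` is EB, `W` arbitrary and `U` unitary; conversely, if `W` is
invertible and `U` unitary and `(W ⊗ U)V` is EB, then `V` is EB. -/
theorem eb_map_product :
    (∀ (m m' n : ℕ) (V : Submodule ℂ (Fin m × Fin n → ℂ))
      (W : Matrix (Fin m') (Fin m) ℂ) (U : Matrix (Fin n) (Fin n) ℂ),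
        U ∈ Matrix.unitaryGroup (Fin n) ℂ → IsEBSpace V →
          IsEBSpace (Submodule.map (W ⊗ₖ U).mulVecLin V)) ∧
    (∀ (m n : ℕ) (V : Submodule ℂ (Fin m × Fin n → ℂ))
      (W : Matrix (Fin m) (Fin m) ℂ) (U : Matrix (Fin n) (Fin n) ℂ),
        U ∈ Matrix.unitaryGroup (Fin n) ℂ → IsUnit W →
          IsEBSpace (Submodule.map (W ⊗ₖ U).mulVecLin V) → IsEBSpace V) := by
  refine ⟨eb_forward, fun m n V W U hU hW hVeb => ?_⟩
  have h2 := eb_forward m m n (Submodule.map (W ⊗ₖ U).mulVecLin V) W⁻¹ (star U)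
    ((Unitary.star_mem hU)) hVeb
  rwa [← Submodule.map_comp, ← Matrix.mulVecLin_mul, ← Matrix.mul_kronecker_mul,
    Matrix.nonsing_inv_mul W ((Matrix.isUnit_iff_isUnit_det W).mp hW), hU.1,
    Matrix.one_kronecker_one, Matrix.mulVecLin_one, Submodule.map_id] at h2
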